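/- The map x ↦ x·ψ₊⁻¹(C/x) is monotone increasing on (0,∞) for any fixed constant C > 0, where ψ₊⁻¹ is the right branch inverse of ψ(ζ) = ζ - 1 - log ζ. -/

import Mathlib

private lemma psi_strictMono : StrictMonoOn (fun t : ℝ => t - 1 - Real.log t) (Set.Ici 1) := by
  apply strictMonoOn_of_deriv_pos (convex_Ici 1)
  · apply ContinuousOn.sub (by fun_prop)
    exact Real.continuousOn_log.mono (fun t ht => by
      simp only [Set.mem_compl_iff, Set.mem_singleton_iff]
      intro h; rw [h] at ht; simp at ht; linarith)
  · intro t ht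
    rw [interior_Ici] at ht
    have ht1 : (1:ℝ) < t := ht
    have ht0 : t ≠ 0 := by linarith
    have hd : HasDerivAt (fun t : ℝ => t - 1 - Real.log t) (1 - t⁻¹) t :=
      ((hasDerivAt_id t).sub_const 1).sub (Real.hasDerivAt_log ht0)
    rw [hd.deriv]
    have : t⁻¹ < 1 := by
      rw [inv_lt_one_iff₀]; right; exact ht1
    linarith

private lemma phi_antitone : AntitoneOn (fun t : ℝ => (1 + Real.log t) / t) (Set.Ici 1) := by
  apply antitoneOn_of_deriv_nonpos (convex_Ici 1)
  · apply ContinuousOn.div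
    · apply ContinuousOn.add continuousOn_const
      exact Real.continuousOn_log.mono (fun t ht => by
        simp only [Set.mem_compl_iff, Set.mem_singleton_iff]
        intro h; rw [h] at ht; simp at ht; linarith)
    · fun_prop
    · intro t ht; simp only [Set.mem_Ici] at ht; intro h; rw [h] at ht; linarith
  · intro t ht
    rw [interior_Ici] at ht
    have ht0 : t ≠ 0 := by have : (1:ℝ) < t := ht; linarith
    have hd : HasDerivAt (fun t : ℝ => (1 + Real.log t) / t)
        ((t⁻¹ * t - (1 + Real.log t) * 1) / t ^ 2) t := by
      exact (((hasDerivAt_const t (1:ℝ)).add (Real.hasDerivAt_log ht0)).div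
        (hasDerivAt_id t) ht0).congr_deriv (by simp)
    exact hd.differentiableAt.differentiableWithinAt
  · intro t ht
    rw [interior_Ici] at ht
    have ht1 : (1:ℝ) < t := ht
    have ht0 : t ≠ 0 := by linarith
    have hd : HasDerivAt (fun t : ℝ => (1 + Real.log t) / t)
        ((t⁻¹ * t - (1 + Real.log t) * 1) / t ^ 2) t := by
      exact (((hasDerivAt_const t (1:ℝ)).add (Real.hasDerivAt_log ht0)).div
        (hasDerivAt_id t) ht0).congr_deriv (by simp)
    rw [hd.deriv]
    have hlog : 0 < Real.log t := Real.log_pos ht1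
    have h1 : t⁻¹ * t = 1 := inv_mul_cancel₀ ht0
    rw [h1]
    apply div_nonpos_of_nonpos_of_nonneg
    · nlinarith
    · positivity

/-- The map `x ↦ x·ψ₊⁻¹(C/x)` is monotone increasing on `(0,∞)` for any fixed `C > 0`,
where `ψ₊⁻¹` is the right-branch inverse of `ψ(ζ) = ζ - 1 - log ζ`. -/
theorem stmt_7 (ψinv : ℝ → ℝ)
    (hψinv : ∀ ξ : ℝ, 0 ≤ ξ →
      1 ≤ ψinv ξ ∧ ψinv ξ - 1 - Real.log (ψinv ξ) = ξ)
    (C : ℝ) (hC : 0 < C) :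
    MonotoneOn (fun x : ℝ => x * ψinv (C / x)) (Set.Ioi 0) := by
  intro x hx y hy hxy
  simp only [Set.mem_Ioi] at hx hy
  set a := ψinv (C / x) with ha
  set b := ψinv (C / y) with hb
  have hax := hψinv (C / x) (le_of_lt (div_pos hC hx))
  have hby := hψinv (C / y) (le_of_lt (div_pos hC hy))
  obtain ⟨ha1, haψ⟩ := hax
  obtain ⟨hb1, hbψ⟩ := hby
  rw [← ha] at ha1 haψ
  rw [← hb] at hb1 hbψ
  have hdiv : C / y ≤ C / x := div_le_div_of_nonneg_left hC.le hx hxy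
  -- b ≤ a
  have hba : b ≤ a := by
    by_contra h
    push_neg at h
    have := psi_strictMono (Set.mem_Ici.mpr ha1) (Set.mem_Ici.mpr hb1) h
    simp only [haψ, hbψ] at this
    linarith
  have ha0 : (0:ℝ) < a := by linarith
  have hb0 : (0:ℝ) < b := by linarith
  -- key inequality from antitonicity of (1+log t)/t
  have hphi := phi_antitone (Set.mem_Ici.mpr hb1) (Set.mem_Ici.mpr ha1) hba
  have hkey : (1 + Real.log a) * b ≤ (1 + Real.log b) * a := by
    rwa [div_le_div_iff₀ ha0 hb0] at hphi
  set Pa := a - 1 - Real.log a with hPa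
  set Pb := b - 1 - Real.log b with hPb
  have hPax : Pa = C / x := haψ
  have hPby : Pb = C / y := hbψ
  have hPapos : 0 < Pa := hPax ▸ div_pos hC hx
  have hPbpos : 0 < Pb := hPby ▸ div_pos hC hy
  have h1 : x * Pa = C := by rw [hPax]; field_simp
  have h2 : y * Pb = C := by rw [hPby]; field_simp
  have hkey2 : a * Pb ≤ b * Pa := by
    rw [hPa, hPb]; nlinarith [hkey]
  -- conclude
  have hmul : x * a * (Pa * Pb) ≤ y * b * (Pa * Pb) := by
    calc x * a * (Pa * Pb) = (x * Pa) * (a * Pb) := by ring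
    _ = C * (a * Pb) := by rw [h1]
    _ ≤ C * (b * Pa) := by exact mul_le_mul_of_nonneg_left hkey2 hC.le
    _ = (y * Pb) * (b * Pa) := by rw [h2]
    _ = y * b * (Pa * Pb) := by ring
  exact le_of_mul_le_mul_right hmul (mul_pos hPapos hPbpos)
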